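/- First periodicity theorem: for each k ∈ {0,1,2,3}, if N ≥ 1 and p, q are natural numbers with 2^(N−1) ≤ p < 2^N ≤ q < 2^(N+1), then for every natural number m one has ω_k(p, q) = ω_k(p, q + m·2^N). -/

import Mathlib

/-- The five states of the Cayley–Dickson twist tree:
corner (C), top (T), left (L), diagonal (D) and interior (I). -/
inductive TwistState : Type
  | C | T | L | D | I
deriving DecidableEq

open TwistState

/-- The interior-node sign `i_k(a,b)` for the doubling product `P_k`, `k ∈ {0,1,2,3}`. -/
def iTwist (k : ℕ) (a b : Bool) : ℤ :=
  match k with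
  | 0 => if a = false ∧ b = false then -1 else 1
  | 1 => -1
  | 2 => 1
  | _ => if a = false ∧ b = false then 1 else -1

/-- One step of the twist-tree finite-state computation: from the current
(state, sign) pair, read a doublet of bits `(a, b)` and move to the new
(state, sign) pair. -/
def twistStep (k : ℕ) : TwistState × ℤ → Bool × Bool → TwistState × ℤ
  | (C, s), (false, false) => (C, s)
  | (C, s), (false, true)  => (T, s)
  | (C, s), (true, false)  => (L, s)
  | (C, s), (true, true)   => (D, -s)
  | (T, s), (false, false) => (T, s)
  | (T, s), (false, true)  => (T, s)
  | (T, s), (true, false)  => (I, s)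
  | (T, s), (true, true)   => (I, -s)
  | (L, s), (false, false) => (L, s)
  | (L, s), (false, true)  => (I, -s)
  | (L, s), (true, false)  => (L, s)
  | (L, s), (true, true)   => (I, s)
  | (D, s), (false, false) => (D, s)
  | (D, s), (false, true)  => (I, -s)
  | (D, s), (true, false)  => (I, s)
  | (D, s), (true, true)   => (D, s)
  | (I, s), (a, b)         => (I, s * iTwist k a b)

/-- The Cayley–Dickson twist `ω_k(p,q)` for the doubling product `P_k`:
write `p` and `q` in binary with a common number of bits (padding with
leading zeros), read the doublets of bits from most significant to least
significant, running the twist-tree automaton starting at state `C` with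
sign `+1`; the result is the final sign. -/
def omegaTwist (k : ℕ) (p q : ℕ) : ℤ :=
  (((List.range (max (Nat.size p) (Nat.size q))).reverse.map
      (fun i => (p.testBit i, q.testBit i))).foldl (twistStep k) (C, 1)).2

lemma twistStep_T (k : ℕ) (s : ℤ) (b : Bool) :
    twistStep k (T, s) (false, b) = (T, s) := by cases b <;> rfl

lemma foldl_T (k : ℕ) (s : ℤ) (l : List (Bool × Bool)) (h : ∀ x ∈ l, x.1 = false) :
    l.foldl (twistStep k) (T, s) = (T, s) := by
  induction l with
  | nil => rfl
  | cons x l ih =>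
    obtain ⟨a, b⟩ := x
    have ha : a = false := h (a, b) List.mem_cons_self
    subst ha
    rw [List.foldl_cons, twistStep_T]
    exact ih fun x hx => h x (by simp [hx])

lemma testBit_top {n i : ℕ} (h1 : 2 ^ i ≤ n) (h2 : n < 2 ^ (i + 1)) : n.testBit i = true := by
  have hpos : 0 < 2 ^ i := Nat.pow_pos (by norm_num)
  have hd1 : 1 ≤ n / 2 ^ i := (Nat.le_div_iff_mul_le hpos).2 (by simpa using h1)
  have hd2 : n / 2 ^ i < 2 := (Nat.div_lt_iff_lt_mul hpos).2 (by rw [pow_succ] at h2; omega)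
  have hdiv : n / 2 ^ i = 1 := by omega
  simp [Nat.testBit_eq_decide_div_mod_eq, hdiv]

/-- First periodicity theorem: for each `k ∈ {0,1,2,3}`, if `N ≥ 1` and
`2^(N-1) ≤ p < 2^N ≤ q < 2^(N+1)`, then for every natural number `m`,
`ω_k(p, q) = ω_k(p, q + m·2^N)`. -/
theorem omegaTwist_first_periodicity :
    ∀ k ∈ ({0, 1, 2, 3} : Finset ℕ), ∀ N p q : ℕ, 1 ≤ N →
      2 ^ (N - 1) ≤ p → p < 2 ^ N → 2 ^ N ≤ q → q < 2 ^ (N + 1) →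
      ∀ m : ℕ, omegaTwist k p q = omegaTwist k p (q + m * 2 ^ N) := by
  intro k _ N p q hN hp1 hp2 hq1 hq2 m
  have hsp : Nat.size p = N := by
    refine le_antisymm (Nat.size_le.2 hp2) ?_
    have h := Nat.lt_size.2 hp1
    omega
  have hsq : Nat.size q = N + 1 :=
    le_antisymm (Nat.size_le.2 hq2) (Nat.lt_size.2 hq1)
  set q' := q + m * 2 ^ N with hq'def
  have hq'ge : 2 ^ N ≤ q' := le_trans hq1 (Nat.le_add_right _ _)
  have hsq' : N + 1 ≤ Nat.size q' := Nat.lt_size.2 hq'ge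
  obtain ⟨u, hu⟩ : ∃ u, Nat.size q' = N + (u + 1) := ⟨Nat.size q' - N - 1, by omega⟩
  have hlow : ∀ i < N, q'.testBit i = q.testBit i := by
    intro i hi
    have h3 : q' % 2 ^ N = q % 2 ^ N := Nat.add_mul_mod_self_right q m (2 ^ N)
    have h1 := Nat.testBit_mod_two_pow q' N i
    have h2 := Nat.testBit_mod_two_pow q N i
    rw [h3] at h1
    simp only [hi, decide_true, Bool.true_and] at h1 h2
    rw [← h1, ← h2]
  have e1 : omegaTwist k p q =
      (((List.range N).reverse.map (fun i => (p.testBit i, q.testBit i))).foldl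
        (twistStep k) (T, 1)).2 := by
    have hmax : max (Nat.size p) (Nat.size q) = N + 1 := by rw [hsp, hsq]; omega
    have hbit : q.testBit N = true := testBit_top hq1 hq2
    have hpbit : p.testBit N = false := Nat.testBit_eq_false_of_lt hp2
    rw [omegaTwist, hmax, List.range_succ, List.reverse_append]
    simp [hbit, hpbit, twistStep]
  have e2 : omegaTwist k p q' =
      (((List.range N).reverse.map (fun i => (p.testBit i, q'.testBit i))).foldl
        (twistStep k) (T, 1)).2 := by
    have hmax : max (Nat.size p) (Nat.size q') = N + (u + 1) := by rw [hsp, hu]; omega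
    have hbit : q'.testBit (N + u) = true := by
      refine testBit_top ?_ ?_
      · exact Nat.lt_size.1 (by omega)
      · have := Nat.lt_size_self q'
        rwa [hu] at this
    have hpbit : ∀ j, p.testBit (N + j) = false := fun j =>
      Nat.testBit_eq_false_of_lt (lt_of_lt_of_le hp2 (Nat.pow_le_pow_right (by norm_num) (by omega)))
    rw [omegaTwist, hmax, List.range_add, List.reverse_append, List.map_append,
      List.foldl_append]
    congr 1
    have : ((List.map (fun x => N + x) (List.range (u + 1))).reverse.map
        (fun i => (p.testBit i, q'.testBit i))).foldl (twistStep k) (C, 1) = (T, 1) := by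
      rw [List.range_succ, List.map_append, List.reverse_append]
      simp only [List.map_cons, List.map_nil, List.reverse_cons, List.reverse_nil,
        List.nil_append, List.map_append, List.singleton_append, List.foldl_cons,
        List.map_map]
      rw [hpbit u, hbit]
      show (_ : List _).foldl (twistStep k) (T, 1) = (T, 1)
      refine foldl_T _ _ _ ?_
      intro x hx
      simp only [List.mem_map, List.mem_reverse, List.mem_range, Function.comp] at hx
      obtain ⟨j, hj, rfl⟩ := hx
      obtain ⟨a, _, rfl⟩ := hj
      exact hpbit a
    rw [this]
  rw [e1, e2]
  congr 2
  refine List.map_congr_left ?_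
  intro i hi
  rw [List.mem_reverse, List.mem_range] at hi
  rw [hlow i hi]
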